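/- Let X be a finite set, D* a probability distribution on X × {0,1} with random pair (x, y*), and p : X → [0,1] a predictor, with J* the joint distribution of (p(x), y*). Then the upper distance to calibration satisfies dCE_upper(J*) = min_{κ ∈ K(J*)} E_{D*}|κ(p(x)) − p(x)|; equivalently: (i) every realization (X', D', p') of J* satisfies dCE(p', D') ≤ min_{κ ∈ K(J*)} E_{D*}|κ(p(x)) − p(x)|, and (ii) there exists a realization of J* whose distance to calibration equals this minimum. -/

import Mathlib

open scoped Classical
open Finset Set

noncomputable section

/-- `D` is a probability distribution on `X × {0,1}` (labels as `Bool`). -/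
def IsDistribution {X : Type} [Fintype X] (D : X × Bool → ℝ) : Prop :=
  (∀ z, 0 ≤ D z) ∧ (∑ z : X × Bool, D z) = 1

/-- A predictor takes values in `[0,1]`. -/
def IsPredictor {X : Type} (p : X → ℝ) : Prop := ∀ x, p x ∈ Set.Icc (0 : ℝ) 1

/-- Numerical value of a Boolean label. -/
def yval (y : Bool) : ℝ := if y then 1 else 0

/-- Marginal mass of a point `x`. -/
def massx {X : Type} (D : X × Bool → ℝ) (x : X) : ℝ := D (x, false) + D (x, true)

/-- Expectation of `f(x, y)` under `D`. -/
def expval {X : Type} [Fintype X] (D : X × Bool → ℝ) (f : X × Bool → ℝ) : ℝ :=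
  ∑ z : X × Bool, D z * f z

/-- Perfect calibration: for every `v` in the image of `p`,
`E[y | p(x) = v] = v`, stated multiplicatively. -/
def PerfectlyCalibrated {X : Type} [Fintype X] (D : X × Bool → ℝ) (p : X → ℝ) : Prop :=
  ∀ v ∈ Set.range p,
    (∑ x : X, if p x = v then D (x, true) else 0) =
      v * (∑ x : X, if p x = v then massx D x else 0)

/-- The expected `ℓ1` distance `d(p1, p2) = E|p1(x) - p2(x)|` between predictors. -/
def distp {X : Type} [Fintype X] (D : X × Bool → ℝ) (p1 p2 : X → ℝ) : ℝ :=
  ∑ x : X, massx D x * |p1 x - p2 x|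

/-- The distance to calibration: the minimal expected `ℓ1` distance from `p` to a
perfectly calibrated predictor (on the same space, with values in `[0,1]`). -/
def dCE {X : Type} [Fintype X] (D : X × Bool → ℝ) (p : X → ℝ) : ℝ :=
  sInf {c : ℝ | ∃ q : X → ℝ, IsPredictor q ∧ PerfectlyCalibrated D q ∧ c = distp D p q}

/-- The joint distribution of `(p(x), y)`, as a density on `ℝ × Bool`. -/
def jointOf {X : Type} [Fintype X] (D : X × Bool → ℝ) (p : X → ℝ) : ℝ × Bool → ℝ :=
  fun w => ∑ x : X, if p x = w.1 then D (x, w.2) else 0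

/-- A realization of a joint prediction-label distribution `J` on `[0,1] × {0,1}`:
a (finite) set `carrier`, a distribution `D'` on `carrier × Bool`, and a predictor
`p'` whose joint prediction-label distribution is `J`. -/
structure Realization (J : ℝ × Bool → ℝ) where
  carrier : Type
  [inst : Fintype carrier]
  D' : carrier × Bool → ℝ
  p' : carrier → ℝ
  hD' : IsDistribution D'
  hp' : IsPredictor p'
  hJ : jointOf D' p' = J

/-- The distance to calibration of a realization. -/
def Realization.dce {J : ℝ × Bool → ℝ} (R : Realization J) : ℝ :=
  @dCE R.carrier R.inst R.D' R.p'

set_option linter.unusedSectionVars false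
set_option linter.unusedVariables false

lemma sum_transfer {X : Type} [Fintype X] (D : X × Bool → ℝ) (p : X → ℝ) (T : Finset ℝ)
    (hT : Finset.image p Finset.univ ⊆ T) (y : Bool) (g : ℝ → ℝ) :
    ∑ x : X, D (x, y) * g (p x) = ∑ v ∈ T, jointOf D p (v, y) * g v := by
  have hmem : ∀ x : X, p x ∈ T := fun x => hT (Finset.mem_image_of_mem p (Finset.mem_univ x))
  calc ∑ x : X, D (x, y) * g (p x)
      = ∑ x : X, ∑ v ∈ T, (if p x = v then D (x, y) * g v else 0) := by
        refine Finset.sum_congr rfl fun x _ => ?_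
        rw [Finset.sum_ite_eq T (p x) (fun v => D (x, y) * g v), if_pos (hmem x)]
    _ = ∑ v ∈ T, ∑ x : X, (if p x = v then D (x, y) * g v else 0) := Finset.sum_comm
    _ = ∑ v ∈ T, jointOf D p (v, y) * g v := by
        refine Finset.sum_congr rfl fun v _ => ?_
        simp [jointOf, Finset.sum_mul, ite_mul]

lemma mass_transfer {X : Type} [Fintype X] (D : X × Bool → ℝ) (p : X → ℝ) (T : Finset ℝ)
    (hT : Finset.image p Finset.univ ⊆ T) (g : ℝ → ℝ) :
    ∑ x : X, massx D x * g (p x)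
      = ∑ v ∈ T, (jointOf D p (v, false) + jointOf D p (v, true)) * g v := by
  simp only [massx, add_mul]
  rw [Finset.sum_add_distrib, Finset.sum_add_distrib,
    sum_transfer D p T hT false g, sum_transfer D p T hT true g]

lemma calib_iff_forall {X : Type} [Fintype X] (D : X × Bool → ℝ) (q : X → ℝ) :
    PerfectlyCalibrated D q ↔ ∀ v : ℝ,
      (∑ x : X, if q x = v then D (x, true) else 0) =
        v * (∑ x : X, if q x = v then massx D x else 0) := by
  constructor
  · intro h v
    by_cases hv : v ∈ Set.range q
    · exact h v hv
    · have h1 : ∀ x : X, ¬ (q x = v) := fun x hx => hv ⟨x, hx⟩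
      simp [h1]
  · intro h v _
    exact h v

lemma calib_iff_Q {X : Type} [Fintype X] (D : X × Bool → ℝ) (p : X → ℝ) (κ : ℝ → ℝ)
    (T : Finset ℝ) (hT : Finset.image p Finset.univ ⊆ T) :
    PerfectlyCalibrated D (fun x => κ (p x)) ↔ ∀ v : ℝ,
      (∑ w ∈ T, if κ w = v then jointOf D p (w, true) else 0) =
        v * (∑ w ∈ T, if κ w = v then
          jointOf D p (w, false) + jointOf D p (w, true) else 0) := by
  rw [calib_iff_forall]
  have key : ∀ v : ℝ,
      ((∑ x : X, if κ (p x) = v then D (x, true) else 0) =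
        (∑ w ∈ T, if κ w = v then jointOf D p (w, true) else 0)) ∧
      ((∑ x : X, if κ (p x) = v then massx D x else 0) =
        (∑ w ∈ T, if κ w = v then
          jointOf D p (w, false) + jointOf D p (w, true) else 0)) := by
    intro v
    constructor
    · have := sum_transfer D p T hT true (fun w => if κ w = v then 1 else 0)
      simpa [mul_ite, mul_one, mul_zero] using this
    · have := mass_transfer D p T hT (fun w => if κ w = v then 1 else 0)
      simpa [mul_ite, mul_one, mul_zero] using this
  constructor
  · intro h v; rw [← (key v).1, ← (key v).2]; exact h v
  · intro h v; rw [(key v).1, (key v).2]; exact h v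

lemma kappa_transfer {X X' : Type} [Fintype X] [Fintype X']
    (D : X × Bool → ℝ) (p : X → ℝ)
    (D' : X' × Bool → ℝ) (p' : X' → ℝ) (hp' : IsPredictor p')
    (hJ : jointOf D' p' = jointOf D p)
    (κ : ℝ → ℝ) (hκ : ∀ v ∈ Set.Icc (0 : ℝ) 1, κ v ∈ Set.Icc (0 : ℝ) 1)
    (hcal : PerfectlyCalibrated D (fun x => κ (p x))) :
    IsPredictor (fun x' => κ (p' x')) ∧ PerfectlyCalibrated D' (fun x' => κ (p' x')) ∧
      distp D' p' (fun x' => κ (p' x')) = ∑ x : X, massx D x * |κ (p x) - p x| := by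
  set T : Finset ℝ := Finset.image p Finset.univ ∪ Finset.image p' Finset.univ with hTdef
  have hT : Finset.image p Finset.univ ⊆ T := Finset.subset_union_left
  have hT' : Finset.image p' Finset.univ ⊆ T := Finset.subset_union_right
  refine ⟨fun x' => hκ _ (hp' x'), ?_, ?_⟩
  · rw [calib_iff_Q D' p' κ T hT', hJ]
    rw [calib_iff_Q D p κ T hT] at hcal
    exact hcal
  · have h1 := mass_transfer D' p' T hT' (fun w => |κ w - w|)
    have h2 := mass_transfer D p T hT (fun w => |κ w - w|)
    rw [hJ] at h1
    have : distp D' p' (fun x' => κ (p' x')) =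
        ∑ x' : X', massx D' x' * |κ (p' x') - p' x'| := by
      simp [distp, abs_sub_comm]
    rw [this, h1, ← h2]

variable {X : Type} [Fintype X]

lemma subtype_sum_pick (p : X → ℝ) (x : X) (f : ↥(Set.range p) → ℝ) :
    ∑ v : ↥(Set.range p), (if p x = (v : ℝ) then f v else 0) = f ⟨p x, ⟨x, rfl⟩⟩ := by
  rw [Finset.sum_eq_single (⟨p x, ⟨x, rfl⟩⟩ : ↥(Set.range p))]
  · simp
  · intro v _ hv
    rw [if_neg]
    intro h; exact hv (Subtype.ext h.symm)
  · intro h; exact absurd (Finset.mem_univ _) h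

def canD (D : X × Bool → ℝ) (p : X → ℝ) : ↥(Set.range p) × Bool → ℝ :=
  fun w => jointOf D p ((w.1 : ℝ), w.2)

def canp (p : X → ℝ) : ↥(Set.range p) → ℝ := fun v => (v : ℝ)

lemma canD_isDistribution (D : X × Bool → ℝ) (hD : IsDistribution D) (p : X → ℝ) :
    IsDistribution (canD D p) := by
  constructor
  · intro z
    refine Finset.sum_nonneg fun x _ => ?_
    split
    · exact hD.1 _
    · exact le_refl 0
  · have h1 : ∀ y : Bool, ∀ x : X,
        ∑ v : ↥(Set.range p), (if p x = (v : ℝ) then D (x, y) else 0) = D (x, y) :=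
      fun y x => subtype_sum_pick p x (fun _ => D (x, y))
    rw [Fintype.sum_prod_type]
    calc ∑ v : ↥(Set.range p), ∑ y : Bool, canD D p (v, y)
        = ∑ v : ↥(Set.range p), ∑ y : Bool, ∑ x : X,
            (if p x = (v : ℝ) then D (x, y) else 0) := rfl
      _ = ∑ y : Bool, ∑ x : X, ∑ v : ↥(Set.range p),
            (if p x = (v : ℝ) then D (x, y) else 0) := by
          rw [Finset.sum_comm]
          exact Finset.sum_congr rfl fun y _ => Finset.sum_comm
      _ = ∑ y : Bool, ∑ x : X, D (x, y) :=
          Finset.sum_congr rfl fun y _ => Finset.sum_congr rfl fun x _ => h1 y x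
      _ = ∑ z : X × Bool, D z := by rw [Fintype.sum_prod_type]; exact Finset.sum_comm
      _ = 1 := hD.2

lemma canp_isPredictor {p : X → ℝ} (hp : IsPredictor p) : IsPredictor (canp (X := X) p) := by
  rintro ⟨v, x, hx⟩
  simpa [canp, ← hx] using hp x

lemma canD_jointOf (D : X × Bool → ℝ) (p : X → ℝ) :
    jointOf (canD D p) (canp p) = jointOf D p := by
  funext w
  show (∑ v : ↥(Set.range p), if (v : ℝ) = w.1 then canD D p (v, w.2) else 0) = _
  by_cases h : w.1 ∈ Set.range p
  · rw [Finset.sum_eq_single (⟨w.1, h⟩ : ↥(Set.range p))]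
    · rw [if_pos rfl]; rfl
    · intro v _ hv; rw [if_neg]; intro he; exact hv (Subtype.ext he)
    · intro hh; exact absurd (Finset.mem_univ _) hh
  · have h1 : ∀ v : ↥(Set.range p), ¬((v : ℝ) = w.1) := fun v he => h (he ▸ v.2)
    have h2 : ∀ x : X, ¬(p x = w.1) := fun x he => h ⟨x, he⟩
    simp [jointOf, h1, h2]


lemma distp_nonneg {X : Type} [Fintype X] {D : X × Bool → ℝ} (hD0 : ∀ z, 0 ≤ D z)
    (p q : X → ℝ) : 0 ≤ distp D p q :=
  Finset.sum_nonneg fun x _ =>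
    mul_nonneg (add_nonneg (hD0 _) (hD0 _)) (abs_nonneg _)

/-- The extension of a predictor on the range of `p` to a post-processing map. -/
def extκ (p : X → ℝ) (q : ↥(Set.range p) → ℝ) : ℝ → ℝ :=
  fun v => if h : v ∈ Set.range p then q ⟨v, h⟩ else v

lemma extκ_comp (p : X → ℝ) (q : ↥(Set.range p) → ℝ) :
    (fun v : ↥(Set.range p) => extκ p q (canp p v)) = q := by
  funext v
  simp only [extκ, canp]
  exact dif_pos v.2

lemma extκ_maps {p : X → ℝ} {q : ↥(Set.range p) → ℝ} (hq : IsPredictor q) :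
    ∀ v ∈ Set.Icc (0 : ℝ) 1, extκ p q v ∈ Set.Icc (0 : ℝ) 1 := by
  intro v hv
  unfold extκ
  split
  · exact hq _
  · exact hv


/-- characterization of the upper distance to calibration: the
supremum of `dCE(p', D')` over all realizations of `J*` is attained, and equals
`min_{κ ∈ K(J*)} E|κ(p(x)) - p(x)|`, the least distance from `p` to a perfectly
calibrated post-processing `κ ∘ p` of `p`. -/
theorem upper_dCE_eq_min_post_processing
    {X : Type} [Fintype X] (D : X × Bool → ℝ) (hD : IsDistribution D)
    (p : X → ℝ) (hp : IsPredictor p) :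
    IsGreatest {c : ℝ | ∃ R : Realization (jointOf D p), c = R.dce}
      (sInf {c : ℝ | ∃ κ : ℝ → ℝ, (∀ v ∈ Set.Icc (0 : ℝ) 1, κ v ∈ Set.Icc (0 : ℝ) 1) ∧
        PerfectlyCalibrated D (fun x => κ (p x)) ∧
        c = ∑ x : X, massx D x * |κ (p x) - p x|}) := by

  set B := {c : ℝ | ∃ κ : ℝ → ℝ, (∀ v ∈ Set.Icc (0 : ℝ) 1, κ v ∈ Set.Icc (0 : ℝ) 1) ∧
        PerfectlyCalibrated D (fun x => κ (p x)) ∧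
        c = ∑ x : X, massx D x * |κ (p x) - p x|} with hBdef
  have hmass : ∑ x : X, massx D x = 1 := by
    rw [← hD.2, Fintype.sum_prod_type]
    refine Finset.sum_congr rfl fun x _ => ?_
    rw [Fintype.sum_bool, massx, add_comm]
  -- B is nonempty: constant post-processing to the mean
  have hBne : B.Nonempty := by
    refine ⟨∑ x : X, massx D x * |(∑ x' : X, D (x', true)) - p x|,
      fun _ => ∑ x' : X, D (x', true), ?_, ?_, rfl⟩
    · intro v _
      constructor
      · exact Finset.sum_nonneg fun x _ => hD.1 _
      · rw [← hD.2, Fintype.sum_prod_type]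
        refine Finset.sum_le_sum fun x _ => ?_
        rw [Fintype.sum_bool]
        exact le_add_of_nonneg_right (hD.1 _)
    · intro v hv
      obtain ⟨x₀, hx₀⟩ := hv
      simp only at hx₀
      subst hx₀
      simp only [eq_self_iff_true, if_true]
      rw [hmass, mul_one]
  -- B is contained in the dCE candidate set of every realization
  have hBsub : ∀ (X' : Type) [inst : Fintype X'] (D' : X' × Bool → ℝ) (p' : X' → ℝ),
      IsPredictor p' → jointOf D' p' = jointOf D p →
      ∀ b ∈ B, b ∈ {c : ℝ | ∃ q : X' → ℝ, IsPredictor q ∧ PerfectlyCalibrated D' q ∧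
        c = distp D' p' q} := by
    intro X' inst D' p' hp' hJ b hb
    obtain ⟨κ, hκ, hcal, hc⟩ := hb
    obtain ⟨h1, h2, h3⟩ := kappa_transfer D p D' p' hp' hJ κ hκ hcal
    exact ⟨fun x' => κ (p' x'), h1, h2, by rw [hc, ← h3]⟩
  -- the canonical realization
  let R₀ : Realization (jointOf D p) :=
    { carrier := ↥(Set.range p)
      D' := canD D p
      p' := canp p
      hD' := canD_isDistribution D hD p
      hp' := canp_isPredictor hp
      hJ := canD_jointOf D p }
  -- its candidate set equals B
  have hA₀ : {c : ℝ | ∃ q : ↥(Set.range p) → ℝ, IsPredictor q ∧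
      PerfectlyCalibrated (canD D p) q ∧ c = distp (canD D p) (canp p) q} = B := by
    apply Set.Subset.antisymm
    · rintro c ⟨q, hq, hqc, rfl⟩
      set T : Finset ℝ :=
        Finset.image p Finset.univ ∪ Finset.image (canp (X := X) p) Finset.univ with hTdef
      have hT : Finset.image p Finset.univ ⊆ T := Finset.subset_union_left
      have hT' : Finset.image (canp (X := X) p) Finset.univ ⊆ T := Finset.subset_union_right
      have hqv : ∀ v : ↥(Set.range p), q v = extκ p q (canp p v) :=
        fun v => (congrFun (extκ_comp p q) v).symm
      refine ⟨extκ p q, extκ_maps hq, ?_, ?_⟩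
      · have hcal' : PerfectlyCalibrated (canD D p) (fun v => extκ p q (canp p v)) := by
          rw [extκ_comp]; exact hqc
        rw [calib_iff_Q (canD D p) (canp p) _ T hT', canD_jointOf] at hcal'
        rw [calib_iff_Q D p _ T hT]
        exact hcal'
      · have h2 := mass_transfer (canD D p) (canp p) T hT' (fun w => |extκ p q w - w|)
        have h3 := mass_transfer D p T hT (fun w => |extκ p q w - w|)
        rw [canD_jointOf] at h2
        calc distp (canD D p) (canp p) q
            = ∑ v : ↥(Set.range p), massx (canD D p) v * |canp p v - q v| := rfl
          _ = ∑ v : ↥(Set.range p),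
                massx (canD D p) v * |extκ p q (canp p v) - canp p v| := by
              refine Finset.sum_congr rfl fun v _ => ?_
              rw [← hqv v, abs_sub_comm]
          _ = ∑ x : X, massx D x * |extκ p q (p x) - p x| := by rw [h2, ← h3]
    · intro b hb
      exact hBsub (↥(Set.range p)) (canD D p) (canp p) (canp_isPredictor hp)
        (canD_jointOf D p) b hb
  have hR₀ : R₀.dce = sInf B := by
    show dCE (canD D p) (canp p) = sInf B
    rw [dCE, hA₀]
  constructor
  · exact ⟨R₀, hR₀.symm⟩
  · rintro c ⟨R, rfl⟩
    refine le_csInf hBne fun b hb => ?_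
    letI := R.inst
    have hbmem := hBsub R.carrier (inst := R.inst) R.D' R.p' R.hp' R.hJ b hb
    show @dCE R.carrier R.inst R.D' R.p' ≤ b
    rw [dCE]
    refine csInf_le ⟨0, ?_⟩ hbmem
    rintro c ⟨q, _, _, rfl⟩
    exact distp_nonneg R.hD'.1 _ _
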